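/- (Minkowski inequality for the pan-integral) Let (X, 𝒜, μ) be a monotone measure space with μ subadditive, E ∈ 𝒜, and p ≥ 1. Then for all f, g ∈ L^p_μ(E), ‖f + g‖_{μ,p} ≤ ‖f‖_{μ,p} + ‖g‖_{μ,p}, i.e. (∫_E^pan |f+g|^p dμ)^{1/p} ≤ (∫_E^pan |f|^p dμ)^{1/p} + (∫_E^pan |g|^p dμ)^{1/p}. -/

import Mathlib

open Set Filter
open scoped ENNReal NNReal Topology

variable {X : Type*}

/-- A monotone measure: vanishes on the empty set, positive on the whole space,
and monotone on measurable sets. -/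
structure MonotoneMeasure [MeasurableSpace X] (mu : Set X → ℝ≥0∞) : Prop where
  empty : mu ∅ = 0
  univ_pos : 0 < mu Set.univ
  mono : ∀ ⦃A B : Set X⦄, MeasurableSet A → MeasurableSet B → A ⊆ B → mu A ≤ mu B

/-- A finite measurable partition of `X`. -/
def IsPanPartition [MeasurableSpace X] {n : ℕ} (A : Fin n → Set X) : Prop :=
  (∀ i, MeasurableSet (A i)) ∧ Pairwise (Function.onFun Disjoint A) ∧ (⋃ i, A i) = Set.univ

/-- The `(+,·)`-based pan-integral of a nonnegative function on `X`. -/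
noncomputable def panIntegral [MeasurableSpace X] (mu : Set X → ℝ≥0∞) (f : X → ℝ≥0∞) : ℝ≥0∞ :=
  ⨆ (n : ℕ) (A : Fin n → Set X) (_ : IsPanPartition A) (lam : Fin n → ℝ≥0)
    (_ : ∀ x, ∑ i, Set.indicator (A i) (fun _ => (lam i : ℝ≥0∞)) x ≤ f x),
    ∑ i, (lam i : ℝ≥0∞) * mu (A i)

/-- The pan-integral of `f` on a set `A`, i.e. the pan-integral of `f·χ_A` on `X`. -/
noncomputable def panIntegralOn [MeasurableSpace X] (mu : Set X → ℝ≥0∞) (f : X → ℝ≥0∞)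
    (A : Set X) : ℝ≥0∞ :=
  panIntegral mu (A.indicator f)

/-- Subadditivity of a set function. -/
def PanSubadditive [MeasurableSpace X] (mu : Set X → ℝ≥0∞) : Prop :=
  ∀ ⦃A B : Set X⦄, MeasurableSet A → MeasurableSet B → mu (A ∪ B) ≤ mu A + mu B

/-- Null-additivity of a set function. -/
def PanNullAdditive [MeasurableSpace X] (mu : Set X → ℝ≥0∞) : Prop :=
  ∀ ⦃A B : Set X⦄, MeasurableSet A → MeasurableSet B → mu B = 0 → mu (A ∪ B) = mu A

/-- Continuity from below of a set function. -/
def PanContinuousFromBelow [MeasurableSpace X] (mu : Set X → ℝ≥0∞) : Prop :=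
  ∀ E : ℕ → Set X, (∀ n, MeasurableSet (E n)) → Monotone E →
    Filter.Tendsto (fun n => mu (E n)) Filter.atTop (nhds (mu (⋃ n, E n)))

/-- A real-valued function is pan-integrable if the pan-integrals of its
positive and negative parts are both finite. -/
def PanIntegrable [MeasurableSpace X] (mu : Set X → ℝ≥0∞) (f : X → ℝ) : Prop :=
  panIntegral mu (fun x => ENNReal.ofReal (f x)) < ⊤ ∧
    panIntegral mu (fun x => ENNReal.ofReal (-f x)) < ⊤

/-- The symmetric pan-integral of a real-valued function:
`∫ f⁺ dμ − ∫ f⁻ dμ`. -/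
noncomputable def panIntegralReal [MeasurableSpace X] (mu : Set X → ℝ≥0∞) (f : X → ℝ) : ℝ :=
  (panIntegral mu (fun x => ENNReal.ofReal (f x))).toReal -
    (panIntegral mu (fun x => ENNReal.ofReal (-f x))).toReal

/-- The `‖·‖_{μ,p}` functional: `(∫_E^pan |f|^p dμ)^(1/p)`. -/
noncomputable def panNorm [MeasurableSpace X] (mu : Set X → ℝ≥0∞) (E : Set X) (p : ℝ)
    (f : X → ℝ) : ℝ≥0∞ :=
  (panIntegralOn mu (fun x => ENNReal.ofReal (|f x| ^ p)) E) ^ (1 / p)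

lemma sum_le_panIntegral [MeasurableSpace X] (mu : Set X → ℝ≥0∞) {ι : Type*} [Fintype ι]
    (B : ι → Set X) (hmeas : ∀ i, MeasurableSet (B i))
    (hdisj : Pairwise (Function.onFun Disjoint B)) (hcover : (⋃ i, B i) = Set.univ)
    (c : ι → ℝ≥0) (h : X → ℝ≥0∞)
    (hle : ∀ x, ∑ i, Set.indicator (B i) (fun _ => (c i : ℝ≥0∞)) x ≤ h x) :
    ∑ i, (c i : ℝ≥0∞) * mu (B i) ≤ panIntegral mu h := by
  classical
  set e := (Fintype.equivFin ι).symm with he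
  have hpart : IsPanPartition (fun j => B (e j)) :=
    ⟨fun j => hmeas _, fun j j' hjj => hdisj (e.injective.ne hjj),
      by rw [e.surjective.iUnion_comp]; exact hcover⟩
  refine le_iSup_of_le (Fintype.card ι) (le_iSup_of_le (fun j => B (e j))
    (le_iSup_of_le hpart (le_iSup_of_le (fun j => c (e j)) (le_iSup_of_le ?_ ?_))))
  · intro x
    rw [Equiv.sum_comp e (fun i => Set.indicator (B i) (fun _ => (c i : ℝ≥0∞)) x)]
    exact hle x
  · rw [Equiv.sum_comp e (fun i => (c i : ℝ≥0∞) * mu (B i))]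

lemma mu_biUnion_le [MeasurableSpace X] {mu : Set X → ℝ≥0∞} (hmu : MonotoneMeasure mu)
    (hsub : PanSubadditive mu) {ι : Type*} (s : Finset ι) (C : ι → Set X)
    (hC : ∀ i, MeasurableSet (C i)) :
    mu (⋃ i ∈ s, C i) ≤ ∑ i ∈ s, mu (C i) := by
  classical
  induction s using Finset.induction_on with
  | empty => simp [hmu.empty]
  | @insert a t ha ih =>
      rw [Finset.set_biUnion_insert, Finset.sum_insert ha]
      exact le_trans
        (hsub (hC _) (MeasurableSet.biUnion t.countable_toSet (fun i _ => hC i)))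
        (add_le_add le_rfl ih)

lemma mu_iUnion_le_fintype [MeasurableSpace X] {mu : Set X → ℝ≥0∞} (hmu : MonotoneMeasure mu)
    (hsub : PanSubadditive mu) {ι : Type*} [Fintype ι] (C : ι → Set X)
    (hC : ∀ i, MeasurableSet (C i)) :
    mu (⋃ i, C i) ≤ ∑ i, mu (C i) := by
  have := mu_biUnion_le hmu hsub Finset.univ C hC
  rwa [show (⋃ i ∈ Finset.univ, C i) = ⋃ i, C i by ext x; simp] at this

lemma panIntegral_add_pow_le [MeasurableSpace X] (mu : Set X → ℝ≥0∞)
    (hmu : MonotoneMeasure mu) (hsub : PanSubadditive mu)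
    {E : Set X} (hE : MeasurableSet E) (p : ℝ) (hp : 1 ≤ p)
    (f g : X → ℝ) (hf : Measurable f) (hg : Measurable g) :
    panIntegral mu (E.indicator fun x => ENNReal.ofReal (|f x + g x| ^ p)) ≤
      ((panIntegral mu (E.indicator fun x => ENNReal.ofReal (|f x| ^ p))) ^ (1 / p)
        + (panIntegral mu (E.indicator fun x => ENNReal.ofReal (|g x| ^ p))) ^ (1 / p)) ^ p := by
  classical
  have hp0 : (0:ℝ) < p := lt_of_lt_of_le one_pos hp
  have hp0' : p ≠ 0 := ne_of_gt hp0
  have hip : (0:ℝ) ≤ 1/p := by positivity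
  set If := panIntegral mu (E.indicator fun x => ENNReal.ofReal (|f x| ^ p)) with hIfdef
  set Ig := panIntegral mu (E.indicator fun x => ENNReal.ofReal (|g x| ^ p)) with hIgdef
  rw [panIntegral]
  refine iSup_le fun n => iSup_le fun A => iSup_le fun hA => iSup_le fun lam =>
    iSup_le fun hlam => ?_
  obtain ⟨hAmeas, hAdisj, hAcover⟩ := hA
  refine ENNReal.le_of_forall_lt_one_mul_le fun a ha => ?_
  -- choose the number of slices K
  have hc1 : a ^ (1/p) < 1 := ENNReal.rpow_lt_one ha (by positivity)
  set γ := (a ^ (1/p)).toReal with hγdef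
  have hγ0 : (0:ℝ) ≤ γ := ENNReal.toReal_nonneg
  have hγ1 : γ < 1 := by
    have h := (ENNReal.toReal_lt_toReal (ne_top_of_lt hc1) ENNReal.one_ne_top).2 hc1
    rwa [ENNReal.toReal_one] at h
  set K := ⌈(1-γ)⁻¹⌉₊ with hKdef
  have hK1 : 1 ≤ K := Nat.one_le_ceil_iff.2 (inv_pos.2 (by linarith))
  have hKpos : (0:ℝ) < K := by exact_mod_cast hK1
  set δ := 1/(K:ℝ) with hδdef
  have hδ0 : 0 < δ := by positivity
  have hδγ : γ ≤ 1 - δ := by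
    have h1 : (1-γ)⁻¹ ≤ (K:ℝ) := Nat.le_ceil _
    have h2 : δ ≤ 1 - γ := by
      rw [hδdef, div_le_iff₀ hKpos]
      calc (1:ℝ) = (1-γ) * (1-γ)⁻¹ := (mul_inv_cancel₀ (by linarith)).symm
        _ ≤ (1-γ) * K := by
            apply mul_le_mul_of_nonneg_left h1 (by linarith)
    linarith
  have haK : a ≤ ENNReal.ofReal ((1-δ)^p) := by
    have h2 : a ^ (1/p) ≤ ENNReal.ofReal (1-δ) := by
      have h3 : a^(1/p) = ENNReal.ofReal γ := (ENNReal.ofReal_toReal (ne_top_of_lt hc1)).symm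
      rw [h3]; exact ENNReal.ofReal_le_ofReal hδγ
    calc a = (a ^ (1/p)) ^ p := by
          rw [← ENNReal.rpow_mul, one_div_mul_cancel hp0', ENNReal.rpow_one]
      _ ≤ (ENNReal.ofReal (1-δ))^p := ENNReal.rpow_le_rpow h2 (le_of_lt hp0)
      _ = ENNReal.ofReal ((1-δ)^p) :=
          ENNReal.ofReal_rpow_of_nonneg (by linarith) (le_of_lt hp0)
  -- the slicing of the partition A
  set L : Fin n → ℝ := fun i => ((lam i : ℝ)) ^ (1/p) with hLdef
  have hL0 : ∀ i, 0 ≤ L i := fun i => Real.rpow_nonneg (lam i).coe_nonneg _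
  have hLp : ∀ i, (L i) ^ p = (lam i : ℝ) := fun i => by
    show (((lam i : ℝ)) ^ (1/p)) ^ p = (lam i : ℝ)
    rw [← Real.rpow_mul (lam i).coe_nonneg, one_div_mul_cancel hp0', Real.rpow_one]
  have hLz : ∀ i, lam i = 0 → L i = 0 := fun i hi => by
    show ((lam i : ℝ)) ^ (1/p) = 0
    rw [hi, NNReal.coe_zero, Real.zero_rpow (one_div_ne_zero hp0')]
  set t : Fin n → ℕ → ℝ := fun i k => L i * k / (K:ℝ) with htdef
  have ht0 : ∀ i k, 0 ≤ t i k := fun i k =>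
    div_nonneg (mul_nonneg (hL0 i) (Nat.cast_nonneg k)) (le_of_lt hKpos)
  have htmono : ∀ i {k k' : ℕ}, k ≤ k' → t i k ≤ t i k' := by
    intro i k k' h
    show L i * k / (K:ℝ) ≤ L i * k' / (K:ℝ)
    have := hL0 i
    gcongr
  -- the refined partition
  set B : Fin n × Fin (K+1) → Set X := fun q =>
    (A q.1 ∩ {x | t q.1 (q.2:ℕ) ≤ |f x|}) ∩
      (if (q.2 : ℕ) = K then Set.univ else {x | |f x| < t q.1 ((q.2:ℕ)+1)}) with hBdef
  have hBsubA : ∀ q, B q ⊆ A q.1 :=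
    fun q => Set.Subset.trans Set.inter_subset_left Set.inter_subset_left
  have hBmeas : ∀ q, MeasurableSet (B q) := by
    intro q
    refine ((hAmeas q.1).inter (measurableSet_le measurable_const hf.abs)).inter ?_
    split_ifs
    · exact MeasurableSet.univ
    · exact measurableSet_lt hf.abs measurable_const
  -- consequences of the pointwise bound hlam
  have hkey : ∀ i x, x ∈ A i → 0 < lam i → x ∈ E ∧ (lam i : ℝ) ≤ |f x + g x| ^ p := by
    intro i x hx hpos
    have hsum : ∑ j, Set.indicator (A j) (fun _ => (lam j : ℝ≥0∞)) x = (lam i : ℝ≥0∞) := by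
      rw [Finset.sum_eq_single i]
      · rw [Set.indicator_of_mem hx]
      · intro j _ hj
        have hxj : x ∉ A j := fun hxj => Set.disjoint_left.1 (hAdisj hj) hxj hx
        exact Set.indicator_of_notMem hxj _
      · intro hi; exact absurd (Finset.mem_univ i) hi
    have h1 := hlam x
    rw [hsum] at h1
    have hxE : x ∈ E := by
      by_contra hxE
      rw [Set.indicator_of_notMem hxE] at h1
      simp only [le_zero_iff, ENNReal.coe_eq_zero] at h1
      exact hpos.ne' h1
    rw [Set.indicator_of_mem hxE] at h1
    refine ⟨hxE, ?_⟩
    rw [← ENNReal.ofReal_coe_nnreal] at h1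
    exact (ENNReal.ofReal_le_ofReal_iff (Real.rpow_nonneg (abs_nonneg _) _)).1 h1
  have hLle : ∀ i x, x ∈ A i → 0 < lam i → L i ≤ |f x| + |g x| := by
    intro i x hx hpos
    obtain ⟨-, h2⟩ := hkey i x hx hpos
    have h3 : L i ≤ |f x + g x| := by
      have h4 := Real.rpow_le_rpow (lam i).coe_nonneg h2 hip
      rwa [← Real.rpow_mul (abs_nonneg _), mul_one_div_cancel hp0', Real.rpow_one] at h4
    exact h3.trans (abs_add_le _ _)
  -- the two coefficient families
  set aa : Fin n × Fin (K+1) → ℝ := fun q => t q.1 (q.2:ℕ) with haadef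
  set bb : Fin n × Fin (K+1) → ℝ := fun q =>
    if (q.2:ℕ) = K then 0 else L q.1 * (1 - ((q.2:ℕ)+1)/(K:ℝ)) with hbbdef
  have haa0 : ∀ q, 0 ≤ aa q := fun q => ht0 _ _
  have hbb0 : ∀ q, 0 ≤ bb q := by
    intro q
    show 0 ≤ if (q.2:ℕ) = K then 0 else L q.1 * (1 - ((q.2:ℕ)+1)/(K:ℝ))
    split_ifs with hk
    · exact le_refl 0
    · apply mul_nonneg (hL0 _)
      have hkK : ((q.2:ℕ):ℝ) + 1 ≤ (K:ℝ) := by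
        have := q.2.isLt
        have : (q.2:ℕ) + 1 ≤ K := by omega
        exact_mod_cast this
      have h5 : (((q.2:ℕ):ℝ)+1)/(K:ℝ) ≤ 1 := by
        rw [div_le_one hKpos]; exact hkK
      linarith
  have haaz : ∀ q, lam q.1 = 0 → aa q = 0 := by
    intro q hq
    show t q.1 (q.2:ℕ) = 0
    show L q.1 * ((q.2:ℕ):ℝ) / (K:ℝ) = 0
    rw [hLz _ hq, zero_mul, zero_div]
  have hbbz : ∀ q, lam q.1 = 0 → bb q = 0 := by
    intro q hq
    show (if (q.2:ℕ) = K then 0 else L q.1 * (1 - ((q.2:ℕ)+1)/(K:ℝ))) = 0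
    split_ifs with hk
    · rfl
    · rw [hLz _ hq, zero_mul]
  have haaf : ∀ q x, x ∈ B q → aa q ≤ |f x| := fun q x hx => hx.1.2
  have hbbg : ∀ q x, x ∈ B q → bb q ≤ |g x| := by
    intro q x hx
    show (if (q.2:ℕ) = K then 0 else L q.1 * (1 - ((q.2:ℕ)+1)/(K:ℝ))) ≤ |g x|
    split_ifs with hk
    · exact abs_nonneg _
    · by_cases hpos : 0 < lam q.1
      · have hup : |f x| < t q.1 ((q.2:ℕ)+1) := by
          have h6 := hx.2
          rw [if_neg hk] at h6
          exact h6
        have hL := hLle q.1 x (hBsubA q hx) hpos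
        have heq : L q.1 * (1 - ((q.2:ℕ)+1)/(K:ℝ)) = L q.1 - t q.1 ((q.2:ℕ)+1) := by
          show _ = L q.1 - L q.1 * (((q.2:ℕ)+1 : ℕ):ℝ) / (K:ℝ)
          push_cast
          field_simp
        rw [heq]
        have hupper := hup.le
        linarith
      · have hq0 : lam q.1 = 0 := le_antisymm (not_lt.1 hpos) zero_le
        rw [hLz _ hq0, zero_mul]
        exact abs_nonneg _
  -- disjointness of the refined partition
  have hBdisj : Pairwise (Function.onFun Disjoint B) := by
    have key2 : ∀ i (k k' : Fin (K+1)), (k:ℕ) < (k':ℕ) → Disjoint (B (i,k)) (B (i,k')) := by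
      intro i k k' hkk
      rw [Set.disjoint_left]
      intro x hx hx'
      have hkK : (k:ℕ) ≠ K := by have := k'.isLt; omega
      have h1 : |f x| < t i ((k:ℕ)+1) := by
        have h6 := hx.2
        rw [if_neg hkK] at h6
        exact h6
      have h2 : t i (k':ℕ) ≤ |f x| := hx'.1.2
      have h3 : t i ((k:ℕ)+1) ≤ t i (k':ℕ) := htmono i (by omega)
      linarith
    intro q q' hqq
    obtain ⟨i,k⟩ := q; obtain ⟨i',k'⟩ := q'
    by_cases hii : i = i'
    · subst hii
      have hkk : k ≠ k' := by rintro rfl; exact hqq rfl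
      have hkk' : (k:ℕ) ≠ (k':ℕ) := fun h => hkk (Fin.ext h)
      rcases lt_or_gt_of_ne hkk' with h | h
      · exact key2 i k k' h
      · exact (key2 i k' k h).symm
    · exact (hAdisj hii).mono (hBsubA (i,k)) (hBsubA (i',k'))
  -- each A i is covered by its slices
  have hslice : ∀ i x, x ∈ A i → ∃ k : Fin (K+1), x ∈ B (i, k) := by
    intro i x hx
    by_cases hfx : L i ≤ |f x|
    · refine ⟨⟨K, by omega⟩, ⟨⟨hx, ?_⟩, ?_⟩⟩
      · show t i K ≤ |f x|
        show L i * (K:ℝ) / (K:ℝ) ≤ |f x|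
        rwa [mul_div_assoc, div_self (ne_of_gt hKpos), mul_one]
      · show x ∈ if (K = K) then Set.univ else _
        rw [if_pos rfl]
        trivial
    · push_neg at hfx
      have hLpos : 0 < L i := lt_of_le_of_lt (abs_nonneg _) hfx
      set y := |f x| * K / L i with hydef
      have hy0 : 0 ≤ y := by positivity
      have hyK : y < K := by
        rw [hydef, div_lt_iff₀ hLpos]
        calc |f x| * (K:ℝ) < L i * K := mul_lt_mul_of_pos_right hfx hKpos
          _ = (K:ℝ) * L i := mul_comm _ _
      have hfloor : ⌊y⌋₊ < K := (Nat.floor_lt hy0).2 hyK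
      refine ⟨⟨⌊y⌋₊, by omega⟩, ⟨⟨hx, ?_⟩, ?_⟩⟩
      · show t i ⌊y⌋₊ ≤ |f x|
        show L i * (⌊y⌋₊:ℝ) / (K:ℝ) ≤ |f x|
        rw [div_le_iff₀ hKpos]
        calc L i * (⌊y⌋₊:ℝ) ≤ L i * y := by
              exact mul_le_mul_of_nonneg_left (Nat.floor_le hy0) (hL0 i)
          _ = |f x| * K := by rw [hydef]; field_simp
      · show x ∈ if (⌊y⌋₊ = K) then Set.univ else {x | |f x| < t i (⌊y⌋₊+1)}
        rw [if_neg (Nat.ne_of_lt hfloor)]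
        show |f x| < t i (⌊y⌋₊+1)
        show |f x| < L i * ((⌊y⌋₊+1 : ℕ):ℝ) / (K:ℝ)
        rw [lt_div_iff₀ hKpos]
        calc |f x| * (K:ℝ) = L i * y := by rw [hydef]; field_simp
          _ < L i * ((⌊y⌋₊+1 : ℕ):ℝ) := by
              apply mul_lt_mul_of_pos_left ?_ hLpos
              push_cast
              exact Nat.lt_floor_add_one y
  have hBcover : (⋃ q, B q) = Set.univ := by
    rw [Set.eq_univ_iff_forall]
    intro x
    have hx : x ∈ ⋃ i, A i := hAcover ▸ Set.mem_univ x
    obtain ⟨i, hi⟩ := Set.mem_iUnion.1 hx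
    obtain ⟨k, hk⟩ := hslice i x hi
    exact Set.mem_iUnion.2 ⟨(i,k), hk⟩
  -- generic pointwise bound for sub-simple functions
  have hsum_gen : ∀ (φ : X → ℝ) (cc : Fin n × Fin (K+1) → ℝ), (∀ q, 0 ≤ cc q) →
      (∀ q x, x ∈ B q → cc q ≤ |φ x|) → (∀ q, lam q.1 = 0 → cc q = 0) →
      ∀ x, ∑ q, Set.indicator (B q) (fun _ => (((cc q ^ p).toNNReal : ℝ≥0) : ℝ≥0∞)) x
        ≤ (E.indicator fun x => ENNReal.ofReal (|φ x| ^ p)) x := by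
    intro φ cc hcc0 hccle hccz x
    by_cases hxB : ∃ q, x ∈ B q
    · obtain ⟨q0, hq0⟩ := hxB
      rw [Finset.sum_eq_single q0]
      · rw [Set.indicator_of_mem hq0]
        by_cases hpos : 0 < lam q0.1
        · have hxE : x ∈ E := (hkey q0.1 x (hBsubA q0 hq0) hpos).1
          rw [Set.indicator_of_mem hxE]
          show ENNReal.ofReal (cc q0 ^ p) ≤ ENNReal.ofReal (|φ x| ^ p)
          exact ENNReal.ofReal_le_ofReal
            (Real.rpow_le_rpow (hcc0 q0) (hccle q0 x hq0) (le_of_lt hp0))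
        · have hl0 : lam q0.1 = 0 := le_antisymm (not_lt.1 hpos) zero_le
          rw [hccz q0 hl0, Real.zero_rpow hp0']
          simp
      · intro q _ hq
        have hxq : x ∉ B q := fun hxq => Set.disjoint_left.1 (hBdisj hq) hxq hq0
        exact Set.indicator_of_notMem hxq _
      · intro hq; exact absurd (Finset.mem_univ q0) hq
    · push_neg at hxB
      rw [Finset.sum_eq_zero (fun q _ => Set.indicator_of_notMem (hxB q) _)]
      exact zero_le
  have hIfge : ∑ q, ((((aa q)^p).toNNReal : ℝ≥0) : ℝ≥0∞) * mu (B q) ≤ If :=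
    sum_le_panIntegral mu B hBmeas hBdisj hBcover _ _ (hsum_gen f aa haa0 haaf haaz)
  have hIgge : ∑ q, ((((bb q)^p).toNNReal : ℝ≥0) : ℝ≥0∞) * mu (B q) ≤ Ig :=
    sum_le_panIntegral mu B hBmeas hBdisj hBcover _ _ (hsum_gen g bb hbb0 hbbg hbbz)
  -- the key pointwise coefficient inequality
  have hC3 : ∀ q, (1-δ) * L q.1 ≤ aa q + bb q := by
    intro q
    show (1-δ) * L q.1 ≤ t q.1 (q.2:ℕ) +
      (if (q.2:ℕ) = K then 0 else L q.1 * (1 - ((q.2:ℕ)+1)/(K:ℝ)))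
    split_ifs with hk
    · show (1-δ) * L q.1 ≤ L q.1 * ((q.2:ℕ):ℝ) / (K:ℝ) + 0
      rw [hk, add_zero, mul_div_assoc, div_self (ne_of_gt hKpos), mul_one]
      have h7 : (1-δ) * L q.1 ≤ 1 * L q.1 :=
        mul_le_mul_of_nonneg_right (by linarith) (hL0 _)
      linarith
    · show (1-δ) * L q.1 ≤ L q.1 * ((q.2:ℕ):ℝ) / (K:ℝ) + L q.1 * (1 - ((q.2:ℕ)+1)/(K:ℝ))
      rw [hδdef]
      have hKne : (K:ℝ) ≠ 0 := ne_of_gt hKpos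
      field_simp
      ring_nf
      exact le_refl _
  have hδ1 : (0:ℝ) ≤ 1 - δ := by linarith
  have hstep : ∀ q, ENNReal.ofReal ((1-δ)^p) * (lam q.1 : ℝ≥0∞)
      ≤ ENNReal.ofReal ((aa q + bb q)^p) := by
    intro q
    have h1 : ENNReal.ofReal ((1-δ)^p) * (lam q.1 : ℝ≥0∞)
        = ENNReal.ofReal (((1-δ) * L q.1)^p) := by
      rw [← ENNReal.ofReal_coe_nnreal (p := lam q.1),
        ← ENNReal.ofReal_mul (by positivity)]
      congr 1
      rw [Real.mul_rpow hδ1 (hL0 _), hLp]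
    rw [h1]
    exact ENNReal.ofReal_le_ofReal
      (Real.rpow_le_rpow (mul_nonneg hδ1 (hL0 _)) (hC3 q) (le_of_lt hp0))
  set Fa : Fin n × Fin (K+1) → ℝ≥0∞ :=
    fun q => ENNReal.ofReal (aa q) * (mu (B q))^(1/p) with hFadef
  set Gb : Fin n × Fin (K+1) → ℝ≥0∞ :=
    fun q => ENNReal.ofReal (bb q) * (mu (B q))^(1/p) with hGbdef
  have hprod : ∀ q, (Fa q + Gb q)^p = ENNReal.ofReal ((aa q + bb q)^p) * mu (B q) := by
    intro q
    calc (Fa q + Gb q)^p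
        = ((ENNReal.ofReal (aa q) + ENNReal.ofReal (bb q)) * mu (B q)^(1/p))^p := by
          rw [add_mul]
      _ = (ENNReal.ofReal (aa q) + ENNReal.ofReal (bb q))^p * (mu (B q)^(1/p))^p :=
          ENNReal.mul_rpow_of_nonneg _ _ (le_of_lt hp0)
      _ = (ENNReal.ofReal (aa q + bb q))^p * mu (B q) := by
          rw [← ENNReal.ofReal_add (haa0 q) (hbb0 q), ← ENNReal.rpow_mul,
            one_div_mul_cancel hp0', ENNReal.rpow_one]
      _ = ENNReal.ofReal ((aa q + bb q)^p) * mu (B q) := by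
          rw [ENNReal.ofReal_rpow_of_nonneg (add_nonneg (haa0 q) (hbb0 q)) (le_of_lt hp0)]
  have hFa : ∀ q, Fa q ^ p = ENNReal.ofReal (aa q ^ p) * mu (B q) := by
    intro q
    show (ENNReal.ofReal (aa q) * (mu (B q))^(1/p)) ^ p = _
    rw [ENNReal.mul_rpow_of_nonneg _ _ (le_of_lt hp0), ← ENNReal.rpow_mul,
      one_div_mul_cancel hp0', ENNReal.rpow_one,
      ENNReal.ofReal_rpow_of_nonneg (haa0 q) (le_of_lt hp0)]
  have hGb : ∀ q, Gb q ^ p = ENNReal.ofReal (bb q ^ p) * mu (B q) := by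
    intro q
    show (ENNReal.ofReal (bb q) * (mu (B q))^(1/p)) ^ p = _
    rw [ENNReal.mul_rpow_of_nonneg _ _ (le_of_lt hp0), ← ENNReal.rpow_mul,
      one_div_mul_cancel hp0', ENNReal.rpow_one,
      ENNReal.ofReal_rpow_of_nonneg (hbb0 q) (le_of_lt hp0)]
  have hmink := ENNReal.Lp_add_le Finset.univ Fa Gb hp
  calc a * ∑ i, (lam i : ℝ≥0∞) * mu (A i)
      ≤ ENNReal.ofReal ((1-δ)^p) * ∑ i, (lam i:ℝ≥0∞) * mu (A i) :=
        mul_le_mul_left haK _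
    _ = ∑ i, ENNReal.ofReal ((1-δ)^p) * (lam i:ℝ≥0∞) * mu (A i) := by
        rw [Finset.mul_sum]
        exact Finset.sum_congr rfl fun i _ => (mul_assoc _ _ _).symm
    _ ≤ ∑ i, ENNReal.ofReal ((1-δ)^p) * (lam i:ℝ≥0∞) * (∑ k : Fin (K+1), mu (B (i,k))) := by
        refine Finset.sum_le_sum fun i _ => mul_le_mul_right ?_ _
        have hAsub : A i ⊆ ⋃ k : Fin (K+1), B (i,k) :=
          fun x hx => Set.mem_iUnion.2 (hslice i x hx)
        exact le_trans
          (hmu.mono (hAmeas i) (MeasurableSet.iUnion fun k => hBmeas (i,k)) hAsub)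
          (mu_iUnion_le_fintype hmu hsub _ fun k => hBmeas (i,k))
    _ = ∑ q : Fin n × Fin (K+1), ENNReal.ofReal ((1-δ)^p) * (lam q.1 : ℝ≥0∞) * mu (B q) := by
        rw [Fintype.sum_prod_type]
        exact Finset.sum_congr rfl fun i _ => Finset.mul_sum _ _ _
    _ ≤ ∑ q, ENNReal.ofReal ((aa q + bb q)^p) * mu (B q) :=
        Finset.sum_le_sum fun q _ => mul_le_mul_left (hstep q) _
    _ = ∑ q, (Fa q + Gb q)^p := Finset.sum_congr rfl fun q _ => (hprod q).symm
    _ = ((∑ q, (Fa q + Gb q)^p)^(1/p))^p := by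
        rw [← ENNReal.rpow_mul, one_div_mul_cancel hp0', ENNReal.rpow_one]
    _ ≤ ((∑ q, Fa q ^p)^(1/p) + (∑ q, Gb q^p)^(1/p))^p :=
        ENNReal.rpow_le_rpow hmink (le_of_lt hp0)
    _ ≤ (If^(1/p) + Ig^(1/p))^p := by
        refine ENNReal.rpow_le_rpow (add_le_add ?_ ?_) (le_of_lt hp0)
        · refine ENNReal.rpow_le_rpow ?_ hip
          calc ∑ q, Fa q ^ p = ∑ q, ENNReal.ofReal (aa q ^p) * mu (B q) :=
                Finset.sum_congr rfl fun q _ => hFa q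
            _ ≤ If := hIfge
        · refine ENNReal.rpow_le_rpow ?_ hip
          calc ∑ q, Gb q ^ p = ∑ q, ENNReal.ofReal (bb q ^p) * mu (B q) :=
                Finset.sum_congr rfl fun q _ => hGb q
            _ ≤ Ig := hIgge

theorem panNorm_minkowski [MeasurableSpace X]
    (mu : Set X → ℝ≥0∞) (hmu : MonotoneMeasure mu) (hsub : PanSubadditive mu)
    {E : Set X} (hE : MeasurableSet E) (p : ℝ) (hp : 1 ≤ p)
    (f g : X → ℝ) (hf : Measurable f) (hg : Measurable g)
    (hfp : panNorm mu E p f < ⊤) (hgp : panNorm mu E p g < ⊤) :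
    panNorm mu E p (fun x => f x + g x) ≤ panNorm mu E p f + panNorm mu E p g := by
  have hp0 : (0:ℝ) < p := lt_of_lt_of_le one_pos hp
  have key := panIntegral_add_pow_le mu hmu hsub hE p hp f g hf hg
  show (panIntegral mu (E.indicator fun x => ENNReal.ofReal (|f x + g x| ^ p))) ^ (1/p)
    ≤ (panIntegral mu (E.indicator fun x => ENNReal.ofReal (|f x| ^ p))) ^ (1/p)
      + (panIntegral mu (E.indicator fun x => ENNReal.ofReal (|g x| ^ p))) ^ (1/p)
  refine le_trans (ENNReal.rpow_le_rpow key (by positivity)) (le_of_eq ?_)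
  rw [← ENNReal.rpow_mul, mul_one_div_cancel (ne_of_gt hp0), ENNReal.rpow_one]
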